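/- Let N ≥ 2 be an integer, T > 0, and let u be a classical solution of problem (P) on [0,1]×[0,T] with initial data u0 ∈ C([0,1]) satisfying 0 < m0 ≤ u0(r) ≤ M0 for all r ∈ [0,1]. Then for all r ∈ [0,1] and t ∈ [0,T], m0 e^{(r^2-1)/2 + (N-1)t} ≤ u(r,t) ≤ max(M0,1) e^{r^2/2 + Nt}. In particular there are constants C1, C2 > 0 depending only on u0 with C1 e^{(N-1)t} ≤ u(r,t) ≤ C2 e^{Nt} on [0,1]×[0,T]. -/

import Mathlib

set_option maxHeartbeats 1000000


open Set Filter Topology Real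


lemma L1 {a b f' : ℝ} {f : ℝ → ℝ} (hab : a < b)
    (hd : HasDerivWithinAt f f' (Icc a b) a)
    (hmin : ∀ x ∈ Icc a b, f a ≤ f x) : 0 ≤ f' := by
  rw [hasDerivWithinAt_iff_tendsto_slope] at hd
  have hsub : Ioc a b ⊆ Icc a b \ {a} := fun x hx => ⟨⟨hx.1.le, hx.2⟩, ne_of_gt hx.1⟩
  have hne : (𝓝[Icc a b \ {a}] a).NeBot := by
    rw [← mem_closure_iff_nhdsWithin_neBot]
    exact closure_mono hsub (by rw [closure_Ioc hab.ne]; exact ⟨le_rfl, hab.le⟩)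
  refine ge_of_tendsto hd (Filter.eventually_of_mem self_mem_nhdsWithin fun x hx => ?_)
  have hxa : a < x := lt_of_le_of_ne hx.1.1 (Ne.symm hx.2)
  rw [slope_def_field]
  exact div_nonneg (by linarith [hmin x hx.1]) (by linarith)

lemma L2 {a b f' : ℝ} {f : ℝ → ℝ} (hab : a < b)
    (hd : HasDerivWithinAt f f' (Icc a b) b)
    (hmin : ∀ x ∈ Icc a b, f b ≤ f x) : f' ≤ 0 := by
  rw [hasDerivWithinAt_iff_tendsto_slope] at hd
  have hsub : Ico a b ⊆ Icc a b \ {b} := fun x hx => ⟨⟨hx.1, hx.2.le⟩, ne_of_lt hx.2⟩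
  have hne : (𝓝[Icc a b \ {b}] b).NeBot := by
    rw [← mem_closure_iff_nhdsWithin_neBot]
    exact closure_mono hsub (by rw [closure_Ico hab.ne]; exact ⟨hab.le, le_rfl⟩)
  refine le_of_tendsto hd (Filter.eventually_of_mem self_mem_nhdsWithin fun x hx => ?_)
  have hxb : x < b := lt_of_le_of_ne hx.1.2 hx.2
  rw [slope_def_field]
  exact div_nonpos_of_nonneg_of_nonpos (by linarith [hmin x hx.1]) (by linarith)

lemma L3 {a b x f' : ℝ} {f : ℝ → ℝ} (hx : x ∈ Ioo a b)
    (hd : HasDerivWithinAt f f' (Icc a b) x)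
    (hmin : ∀ y ∈ Icc a b, f x ≤ f y) : f' = 0 := by
  have h1 : 0 ≤ f' := L1 hx.2 (hd.mono (Icc_subset_Icc hx.1.le le_rfl))
    fun y hy => hmin y ⟨le_trans hx.1.le hy.1, hy.2⟩
  have h2 : f' ≤ 0 := L2 hx.1 (hd.mono (Icc_subset_Icc le_rfl hx.2.le))
    fun y hy => hmin y ⟨hy.1, le_trans hy.2 hx.2.le⟩
  linarith

lemma L4 {a b x f2 : ℝ} {f f1 : ℝ → ℝ} (hx : x ∈ Ioo a b)
    (hmin : ∀ y ∈ Icc a b, f x ≤ f y)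
    (hd1 : ∀ y ∈ Icc a b, HasDerivWithinAt f (f1 y) (Icc a b) y)
    (hd2 : HasDerivWithinAt f1 f2 (Icc a b) x) : 0 ≤ f2 := by
  have hxm : x ∈ Icc a b := ⟨hx.1.le, hx.2.le⟩
  have h10 : f1 x = 0 := L3 hx (hd1 x hxm) hmin
  by_contra hneg
  push_neg at hneg
  -- slopes of f1 on the right of x tend to f2 < 0
  have hd2' : HasDerivWithinAt f1 f2 (Icc x b) x := hd2.mono (Icc_subset_Icc hx.1.le le_rfl)
  rw [hasDerivWithinAt_iff_tendsto_slope] at hd2'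
  have hev : ∀ᶠ y in 𝓝[Icc x b \ {x}] x, slope f1 x y < 0 := hd2'.eventually (gt_mem_nhds hneg)
  rw [eventually_nhdsWithin_iff, Metric.eventually_nhds_iff] at hev
  obtain ⟨δ, hδ, hball⟩ := hev
  set r1 : ℝ := min (x + δ/2) b with hr1
  have hr1x : x < r1 := lt_min (by linarith) hx.2
  have hr1b : r1 ≤ b := min_le_right _ _
  have hneg1 : ∀ y ∈ Ioo x r1, f1 y < 0 := by
    intro y hy
    have hyd : dist y x < δ := by
      rw [Real.dist_eq, abs_of_pos (by linarith [hy.1])]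
      have := hy.2
      have : y < x + δ/2 := lt_of_lt_of_le this (min_le_left _ _)
      linarith
    have hmem : y ∈ Icc x b \ {x} := ⟨⟨hy.1.le, le_trans hy.2.le hr1b⟩, ne_of_gt hy.1⟩
    have := hball hyd hmem
    rw [slope_def_field, h10, sub_zero] at this
    have hyx : 0 < y - x := by linarith [hy.1]
    by_contra hc
    push_neg at hc
    exact absurd this (not_lt.2 (div_nonneg hc hyx.le))
  -- MVT on [x, r1]
  have hsub : Icc x r1 ⊆ Icc a b := Icc_subset_Icc hx.1.le (le_trans hr1b le_rfl)
  have hcont : ContinuousOn f (Icc x r1) :=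
    fun y hy => ((hd1 y (hsub hy)).continuousWithinAt).mono hsub
  have hderiv : ∀ y ∈ Ioo x r1, HasDerivAt f (f1 y) y := by
    intro y hy
    have hyab : y ∈ Ioo a b := ⟨lt_trans hx.1 hy.1, lt_of_lt_of_le hy.2 hr1b⟩
    exact (hd1 y ⟨hyab.1.le, hyab.2.le⟩).hasDerivAt (Icc_mem_nhds hyab.1 hyab.2)
  obtain ⟨c, hc, hceq⟩ := exists_hasDerivAt_eq_slope f f1 hr1x hcont hderiv
  have h1 : f1 c < 0 := hneg1 c hc
  have h2 : 0 ≤ (f r1 - f x) / (r1 - x) :=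
    div_nonneg (by linarith [hmin r1 (hsub ⟨hr1x.le, le_rfl⟩)]) (by linarith)
  rw [hceq] at h1
  linarith

lemma hdP_r (c k a t r : ℝ) :
    HasDerivAt (fun s : ℝ => c * Real.exp ((s^2 - k)/2 + a*t))
      (r * (c * Real.exp ((r^2 - k)/2 + a*t))) r := by
  have h1 : HasDerivAt (fun s : ℝ => (s^2 - k)/2 + a*t) r r := by
    have h := (((hasDerivAt_pow 2 r).sub_const k).div_const 2).add_const (a*t)
    refine h.congr_deriv ?_
    simp
  have h2 := (h1.exp).const_mul c
  refine h2.congr_deriv ?_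
  ring

lemma hdP_rr (c k a t r : ℝ) :
    HasDerivAt (fun s : ℝ => s * (c * Real.exp ((s^2 - k)/2 + a*t)))
      ((1 + r^2) * (c * Real.exp ((r^2 - k)/2 + a*t))) r := by
  have h := (hasDerivAt_id r).mul (hdP_r c k a t r)
  refine h.congr_deriv ?_
  simp only [id_eq, one_mul]
  ring

lemma hdP_t (c k a r t : ℝ) :
    HasDerivAt (fun tau : ℝ => c * Real.exp ((r^2 - k)/2 + a*tau))
      (a * (c * Real.exp ((r^2 - k)/2 + a*t))) t := by
  have h1 : HasDerivAt (fun tau : ℝ => (r^2 - k)/2 + a*tau) a t := by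
    simpa using ((hasDerivAt_id t).const_mul a).const_add ((r^2 - k)/2)
  have h2 := (h1.exp).const_mul c
  refine h2.congr_deriv ?_
  ring

lemma hd_q (e r : ℝ) :
    HasDerivAt (fun s : ℝ => e * (2*s^2 - s + 1)) (e * (4*r - 1)) r := by
  have h := ((((hasDerivAt_pow 2 r).const_mul 2).sub (hasDerivAt_id r)).add_const 1).const_mul e
  refine h.congr_deriv ?_
  simp only [id_eq, pow_one, Nat.cast_ofNat]
  ring

lemma contP (c k a : ℝ) (e : ℝ) :
    Continuous (fun p : ℝ × ℝ => c * Real.exp ((p.1^2 - k)/2 + a*p.2) - e*(2*p.1^2 - p.1 + 1)) := by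
  fun_prop

lemma hd_q' (e r : ℝ) :
    HasDerivAt (fun s : ℝ => e * (4*s - 1)) (e*4) r := by
  have h := (((hasDerivAt_id r).const_mul 4).sub_const 1).const_mul e
  refine h.congr_deriv ?_
  simp

lemma L5 {T : ℝ} (hT : 0 < T) (w wr wrr wt : ℝ → ℝ → ℝ)
    (hc : ContinuousOn (fun p : ℝ × ℝ => w p.1 p.2) (Icc 0 1 ×ˢ Icc 0 T))
    (hdr : ∀ t ∈ Ioc (0:ℝ) T, ∀ r ∈ Icc (0:ℝ) 1,
      HasDerivWithinAt (fun s => w s t) (wr r t) (Icc 0 1) r)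
    (hdrr : ∀ t ∈ Ioc (0:ℝ) T, ∀ r ∈ Icc (0:ℝ) 1,
      HasDerivWithinAt (fun s => wr s t) (wrr r t) (Icc 0 1) r)
    (hdt : ∀ t ∈ Ioc (0:ℝ) T, ∀ r ∈ Icc (0:ℝ) 1,
      HasDerivWithinAt (fun tau => w r tau) (wt r t) (Icc 0 T) t)
    (h0 : ∀ r ∈ Icc (0:ℝ) 1, 0 < w r 0)
    (hA : ∀ t ∈ Ioc (0:ℝ) T, wr 0 t < 0)
    (hB : ∀ t ∈ Ioc (0:ℝ) T, w 1 t = 0 → 0 < wr 1 t)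
    (hC : ∀ t ∈ Ioc (0:ℝ) T, ∀ r ∈ Ioo (0:ℝ) 1,
      w r t = 0 → wr r t = 0 → 0 ≤ wrr r t → 0 < wt r t) :
    ∀ r ∈ Icc (0:ℝ) 1, ∀ t ∈ Icc (0:ℝ) T, 0 ≤ w r t := by
  by_contra hcon
  push_neg at hcon
  obtain ⟨rb, hrb, tb, htb, hwb⟩ := hcon
  -- the "bad" compact set
  set K : Set (ℝ × ℝ) := Icc 0 1 ×ˢ Icc 0 T with hK
  have hKc : IsCompact K := (isCompact_Icc).prod isCompact_Icc
  set K' : Set (ℝ × ℝ) := K ∩ (fun p : ℝ × ℝ => w p.1 p.2) ⁻¹' (Iic 0) with hK'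
  have hK'closed : IsClosed K' :=
    hc.preimage_isClosed_of_isClosed (isClosed_Icc.prod isClosed_Icc) isClosed_Iic
  have hK'c : IsCompact K' := hKc.of_isClosed_subset hK'closed inter_subset_left
  have hK'ne : K'.Nonempty := ⟨(rb, tb), ⟨⟨hrb, htb⟩, hwb.le⟩⟩
  obtain ⟨⟨r0, t0⟩, hp0K, hp0min⟩ := hK'c.exists_isMinOn hK'ne (continuous_snd.continuousOn)
  have hr0 : r0 ∈ Icc (0:ℝ) 1 := hp0K.1.1
  have ht0 : t0 ∈ Icc (0:ℝ) T := hp0K.1.2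
  have hw0 : w r0 t0 ≤ 0 := hp0K.2
  have hbefore : ∀ r ∈ Icc (0:ℝ) 1, ∀ t ∈ Icc (0:ℝ) T, t < t0 → 0 < w r t := by
    intro r hr t ht hlt
    by_contra hneg
    push_neg at hneg
    have hmem : (r, t) ∈ K' := ⟨⟨hr, ht⟩, hneg⟩
    exact absurd (hp0min hmem) (not_le.2 hlt)
  have ht0pos : 0 < t0 := by
    rcases eq_or_lt_of_le ht0.1 with h | h
    · exact absurd hw0 (not_le.2 (by rw [← h]; exact h0 r0 hr0))
    · exact h
  have ht0T : t0 ∈ Ioc (0:ℝ) T := ⟨ht0pos, ht0.2⟩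
  have hslab : ∀ r ∈ Icc (0:ℝ) 1, ∀ t ∈ Icc (0:ℝ) t0, 0 ≤ w r t := by
    intro r hr t ht
    rcases eq_or_lt_of_le ht.2 with h | h
    · rw [h]
      have hcw : ContinuousWithinAt (fun tau => w r tau) (Icc 0 T) t0 :=
        (hdt t0 ht0T r hr).continuousWithinAt
      have hmono : Tendsto (fun tau => w r tau) (𝓝[Ico 0 t0] t0) (𝓝 (w r t0)) :=
        hcw.mono_left (nhdsWithin_mono _ (fun y hy => ⟨hy.1, le_trans hy.2.le ht0.2⟩))
      have hne : (𝓝[Ico (0:ℝ) t0] t0).NeBot := by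
        rw [← mem_closure_iff_nhdsWithin_neBot, closure_Ico ht0pos.ne]
        exact ⟨ht0pos.le, le_rfl⟩
      refine ge_of_tendsto hmono (Filter.eventually_of_mem self_mem_nhdsWithin fun y hy => ?_)
      exact (hbefore r hr y ⟨hy.1, le_trans hy.2.le ht0.2⟩ hy.2).le
    · exact (hbefore r hr t ⟨ht.1, le_trans ht.2 ht0.2⟩ h).le
  have hw00 : w r0 t0 = 0 := le_antisymm hw0 (hslab r0 hr0 t0 ⟨ht0pos.le, le_rfl⟩)
  have hsmin : ∀ y ∈ Icc (0:ℝ) 1, w r0 t0 ≤ w y t0 := fun y hy => by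
    rw [hw00]; exact hslab y hy t0 ⟨ht0pos.le, le_rfl⟩
  have htder : wt r0 t0 ≤ 0 := by
    have hd : HasDerivWithinAt (fun tau => w r0 tau) (wt r0 t0) (Icc 0 t0) t0 :=
      (hdt t0 ht0T r0 hr0).mono (Icc_subset_Icc le_rfl ht0.2)
    exact L2 ht0pos hd (fun y hy => by rw [hw00]; exact hslab r0 hr0 y hy)
  rcases eq_or_lt_of_le hr0.1 with h0r | h0r
  · subst h0r
    have h1 : 0 ≤ wr 0 t0 := L1 one_pos (hdr t0 ht0T 0 hr0) (fun y hy => by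
      rw [hw00]; exact hslab y hy t0 ⟨ht0pos.le, le_rfl⟩)
    exact absurd (hA t0 ht0T) (not_lt.2 h1)
  rcases eq_or_lt_of_le hr0.2 with h1r | h1r
  · subst h1r
    have h1 : wr 1 t0 ≤ 0 := L2 one_pos (hdr t0 ht0T 1 hr0) hsmin
    exact absurd (hB t0 ht0T hw00) (not_lt.2 h1)
  · have hro : r0 ∈ Ioo (0:ℝ) 1 := ⟨h0r, h1r⟩
    have hwr0 : wr r0 t0 = 0 := L3 hro (hdr t0 ht0T r0 hr0) hsmin
    have hwrr0 : 0 ≤ wrr r0 t0 :=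
      L4 hro hsmin (fun y hy => hdr t0 ht0T y hy) (hdrr t0 ht0T r0 hr0)
    exact absurd (hC t0 ht0T r0 hro hw00 hwr0 hwrr0) (not_lt.2 htder)

lemma key_low (N : ℕ) (hN : 2 ≤ N) (T : ℝ) (hT : 0 < T)
    (u0 : ℝ → ℝ) (m0 : ℝ) (hm0 : 0 < m0)
    (hu0m : ∀ r ∈ Icc (0:ℝ) 1, m0 ≤ u0 r)
    (u ur urr ut : ℝ → ℝ → ℝ)
    (hcu : ContinuousOn (fun p : ℝ × ℝ => u p.1 p.2) (Icc 0 1 ×ˢ Icc 0 T))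
    (hdru : ∀ t ∈ Ioc (0:ℝ) T, ∀ r ∈ Icc (0:ℝ) 1, HasDerivWithinAt (fun s => u s t) (ur r t) (Icc 0 1) r)
    (hdrur : ∀ t ∈ Ioc (0:ℝ) T, ∀ r ∈ Icc (0:ℝ) 1, HasDerivWithinAt (fun s => ur s t) (urr r t) (Icc 0 1) r)
    (hdtu : ∀ t ∈ Ioc (0:ℝ) T, ∀ r ∈ Icc (0:ℝ) 1, HasDerivWithinAt (fun tau => u r tau) (ut r t) (Icc 0 T) t)
    (heq : ∀ t ∈ Ioc (0:ℝ) T, ∀ r ∈ Ioo (0:ℝ) 1,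
      ut r t = urr r t / (1 + (ur r t) ^ 2) + (((N : ℝ) - 1) / r) * ur r t)
    (hbc0 : ∀ t ∈ Ioc (0:ℝ) T, ur 0 t = 0)
    (hbc1 : ∀ t ∈ Ioc (0:ℝ) T, ur 1 t = u 1 t)
    (hinit : ∀ r ∈ Icc (0:ℝ) 1, u r 0 = u0 r) :
    ∀ r ∈ Icc (0:ℝ) 1, ∀ t ∈ Icc (0:ℝ) T,
      m0 * Real.exp ((r ^ 2 - 1) / 2 + ((N : ℝ) - 1) * t) ≤ u r t := by
  have hN1 : (1:ℝ) ≤ (N:ℝ) - 1 := by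
    have h2 : (2:ℝ) ≤ (N:ℝ) := by exact_mod_cast hN
    linarith
  have haN : (N:ℝ) - 1 ≤ (N:ℝ) := by linarith
  have hNpos : (0:ℝ) < N := by linarith
  set Pmax : ℝ := m0 * Real.exp (((N:ℝ)-1)*T) with hPmaxdef
  set Pmin : ℝ := m0 * Real.exp (-(1:ℝ)/2) with hPmindef
  have hPmax0 : 0 < Pmax := by positivity
  have hPmin0 : 0 < Pmin := by positivity
  set Ql : ℝ := 1 + (Pmax + 3)^2 with hQldef
  have hQl0 : 0 < Ql := by positivity
  set e0 : ℝ := min 1 (min (Pmin/8) (Pmin/(16*Ql*N))) with he0def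
  have he00 : 0 < e0 := lt_min one_pos (lt_min (by positivity) (by positivity))
  have main : ∀ ε : ℝ, 0 < ε → ε ≤ e0 → ∀ r ∈ Icc (0:ℝ) 1, ∀ t ∈ Icc (0:ℝ) T,
      0 ≤ u r t - (m0 * Real.exp ((r^2 - 1)/2 + ((N:ℝ)-1)*t) - ε*(2*r^2 - r + 1)) := by
    intro ε he hele
    have he1 : ε ≤ 1 := le_trans hele (min_le_left _ _)
    have he8 : ε ≤ Pmin/8 := le_trans hele (le_trans (min_le_right _ _) (min_le_left _ _))
    have heN : ε ≤ Pmin/(16*Ql*N) := le_trans hele (le_trans (min_le_right _ _) (min_le_right _ _))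
    refine L5 hT
      (fun r t => u r t - (m0 * Real.exp ((r^2 - 1)/2 + ((N:ℝ)-1)*t) - ε*(2*r^2 - r + 1)))
      (fun r t => ur r t - (r * (m0 * Real.exp ((r^2 - 1)/2 + ((N:ℝ)-1)*t)) - ε*(4*r - 1)))
      (fun r t => urr r t - ((1 + r^2) * (m0 * Real.exp ((r^2 - 1)/2 + ((N:ℝ)-1)*t)) - ε*4))
      (fun r t => ut r t - ((N:ℝ)-1) * (m0 * Real.exp ((r^2 - 1)/2 + ((N:ℝ)-1)*t)))
      ?_ ?_ ?_ ?_ ?_ ?_ ?_ ?_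
    · exact hcu.sub ((contP m0 1 ((N:ℝ)-1) ε).continuousOn)
    · intro t ht r hr
      exact (hdru t ht r hr).sub (((hdP_r m0 1 ((N:ℝ)-1) t r).sub (hd_q ε r)).hasDerivWithinAt)
    · intro t ht r hr
      exact (hdrur t ht r hr).sub (((hdP_rr m0 1 ((N:ℝ)-1) t r).sub (hd_q' ε r)).hasDerivWithinAt)
    · intro t ht r hr
      exact (hdtu t ht r hr).sub (((hdP_t m0 1 ((N:ℝ)-1) r t).sub_const (ε*(2*r^2 - r + 1))).hasDerivWithinAt)
    · -- initial positivity
      intro r hr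
      have hE1 : Real.exp ((r^2 - 1)/2 + ((N:ℝ)-1)*0) ≤ 1 := by
        rw [Real.exp_le_one_iff]
        nlinarith only [hr.1, hr.2]
      have hq : (7:ℝ)/8 ≤ 2*r^2 - r + 1 := by nlinarith only [sq_nonneg (4*r - 1)]
      have hu0r : m0 ≤ u0 r := hu0m r hr
      have := hinit r hr
      rw [this]
      nlinarith only [hm0, he, hE1, hq, hu0r]
    · -- r = 0 boundary
      intro t ht
      rw [hbc0 t ht]
      linarith only [he]
    · -- r = 1 boundary
      intro t ht hw
      rw [hbc1 t ht]
      linarith only [hw, he]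
    · -- interior
      intro t ht r hro hw hwr hwrr
      have hr : r ∈ Icc (0:ℝ) 1 := ⟨hro.1.le, hro.2.le⟩
      set A : ℝ := m0 * Real.exp ((r^2 - 1)/2 + ((N:ℝ)-1)*t) with hAdef
      have hA0 : 0 < A := by positivity
      have hat : 0 ≤ ((N:ℝ)-1)*t := mul_nonneg (by linarith) ht.1.le
      have hAmin : Pmin ≤ A := by
        rw [hPmindef, hAdef]
        have : (-(1:ℝ)/2) ≤ (r^2 - 1)/2 + ((N:ℝ)-1)*t := by nlinarith only [sq_nonneg r, hat]
        exact mul_le_mul_of_nonneg_left (Real.exp_le_exp.2 this) hm0.le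
      have hAmax : A ≤ Pmax := by
        rw [hPmaxdef, hAdef]
        have h1 : (r^2 - 1)/2 + ((N:ℝ)-1)*t ≤ ((N:ℝ)-1)*T := by
          have : ((N:ℝ)-1)*t ≤ ((N:ℝ)-1)*T := mul_le_mul_of_nonneg_left ht.2 (by linarith)
          nlinarith only [this, hro.2.le, hro.1.le]
        exact mul_le_mul_of_nonneg_left (Real.exp_le_exp.2 h1) hm0.le
      have hurD : ur r t = r*A - ε*(4*r - 1) := by linarith only [hwr]
      have hurrD : (1 + r^2)*A - ε*4 ≤ urr r t := by linarith only [hwrr]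
      have hDb : (r*A - ε*(4*r - 1))^2 ≤ (Pmax + 3)^2 := by
        have h1 : r*A - ε*(4*r - 1) ≤ Pmax + 3 := by
          nlinarith only [hro.1.le, hro.2.le, hA0, hAmax, he, he1]
        have h2 : -(Pmax + 3) ≤ r*A - ε*(4*r - 1) := by
          nlinarith only [hro.1.le, hro.2.le, hA0, hAmax, he, he1]
        exact sq_le_sq' h2 h1
      have hden : (0:ℝ) < 1 + (r*A - ε*(4*r - 1))^2 := by positivity
      have hQlle : 1 + (r*A - ε*(4*r - 1))^2 ≤ Ql := by rw [hQldef]; linarith only [hDb]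
      have hnum : Pmin/2 ≤ (1 + r^2)*A - ε*4 := by nlinarith only [hAmin, he8, hA0, sq_nonneg r, hPmin0]
      have hfrac : Pmin/2/Ql ≤ urr r t / (1 + (r*A - ε*(4*r - 1))^2) :=
        div_le_div₀ (le_trans (by positivity) (le_trans hnum hurrD)) (le_trans hnum hurrD) hden hQlle
      have h3 : ((N:ℝ)-1)*ε*(4*r - 1)/r ≤ 4*(((N:ℝ)-1)*ε) := by
        rw [div_le_iff₀ hro.1]
        linarith only [mul_nonneg (by linarith only [hN1] : (0:ℝ) ≤ (N:ℝ)-1) he.le]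
      have h4 : 4*(((N:ℝ)-1)*ε) < Pmin/2/Ql := by
        rw [div_div, lt_div_iff₀ (by positivity)]
        have h16 : ε*(16*Ql*N) ≤ Pmin := (le_div_iff₀ (by positivity)).1 heN
        have h8 : 8*Ql*ε*((N:ℝ)-1) ≤ 8*Ql*ε*(N:ℝ) :=
          mul_le_mul_of_nonneg_left haN (by positivity)
        linarith only [hPmin0, h16, h8, mul_nonneg hQl0.le he.le]
      rw [heq t ht r hro, hurD]
      have hrne : r ≠ 0 := ne_of_gt hro.1
      have hsplit : ((N:ℝ)-1)/r*(r*A - ε*(4*r - 1)) = ((N:ℝ)-1)*A - ((N:ℝ)-1)*ε*(4*r - 1)/r := by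
        field_simp
      rw [hsplit]
      linarith only [hfrac, h3, h4]
  intro r hr t ht
  by_contra hlt
  push_neg at hlt
  have hphi : 0 < m0 * Real.exp ((r^2 - 1)/2 + ((N:ℝ)-1)*t) - u r t := by
    linarith only [hlt]
  set ε : ℝ := min e0 ((m0 * Real.exp ((r^2 - 1)/2 + ((N:ℝ)-1)*t) - u r t)/4) with hedef
  have hεpos : 0 < ε := lt_min he00 (by positivity)
  have h := main ε hεpos (min_le_left _ _) r hr t ht
  have hq2 : 2*r^2 - r + 1 ≤ 2 := by nlinarith only [hr.1, hr.2]
  have hε4 : ε ≤ (m0 * Real.exp ((r^2 - 1)/2 + ((N:ℝ)-1)*t) - u r t)/4 := min_le_right _ _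
  linarith only [h, mul_le_mul_of_nonneg_left hq2 hεpos.le, hε4, hphi]

lemma aux_num (B r ε rc mu Bmax kap : ℝ)
    (hT1' : rc ^ 2 * mu ≤ B * r ^ 2 * (B ^ 2 - 1))
    (hT2' : -(6 * (Bmax ^ 2 * ε)) ≤ 2 * r * B ^ 2 * (ε * (4 * r - 1)))
    (hT3 : 0 ≤ B * (ε * (4 * r - 1)) ^ 2)
    (h2 : ε * (2 * (6 * Bmax ^ 2 + 4)) ≤ rc ^ 2 * mu)
    (hkap : kap = rc ^ 2 * mu / 2) :
    kap ≤ B * ((r * B + ε * (4 * r - 1)) ^ 2 - r ^ 2) - ε * 4 := by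
  have hexp : B * ((r * B + ε * (4 * r - 1)) ^ 2 - r ^ 2) =
      B * r ^ 2 * (B ^ 2 - 1) + 2 * r * B ^ 2 * (ε * (4 * r - 1)) + B * (ε * (4 * r - 1)) ^ 2 := by
    ring
  linarith only [hexp, hT1', hT2', hT3, h2, hkap]

lemma one_le_exp_of_nonneg {x : ℝ} (hx : 0 ≤ x) : 1 ≤ Real.exp x := by
  calc (1:ℝ) = Real.exp 0 := (Real.exp_zero).symm
  _ ≤ Real.exp x := Real.exp_le_exp.2 hx

lemma key_up (N : ℕ) (hN : 2 ≤ N) (T : ℝ) (hT : 0 < T)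
    (u0 : ℝ → ℝ) (M0 : ℝ)
    (hu0M : ∀ r ∈ Icc (0:ℝ) 1, u0 r ≤ M0)
    (u ur urr ut : ℝ → ℝ → ℝ)
    (hcu : ContinuousOn (fun p : ℝ × ℝ => u p.1 p.2) (Icc 0 1 ×ˢ Icc 0 T))
    (hdru : ∀ t ∈ Ioc (0:ℝ) T, ∀ r ∈ Icc (0:ℝ) 1, HasDerivWithinAt (fun s => u s t) (ur r t) (Icc 0 1) r)
    (hdrur : ∀ t ∈ Ioc (0:ℝ) T, ∀ r ∈ Icc (0:ℝ) 1, HasDerivWithinAt (fun s => ur s t) (urr r t) (Icc 0 1) r)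
    (hdtu : ∀ t ∈ Ioc (0:ℝ) T, ∀ r ∈ Icc (0:ℝ) 1, HasDerivWithinAt (fun tau => u r tau) (ut r t) (Icc 0 T) t)
    (heq : ∀ t ∈ Ioc (0:ℝ) T, ∀ r ∈ Ioo (0:ℝ) 1,
      ut r t = urr r t / (1 + (ur r t) ^ 2) + (((N : ℝ) - 1) / r) * ur r t)
    (hbc0 : ∀ t ∈ Ioc (0:ℝ) T, ur 0 t = 0)
    (hbc1 : ∀ t ∈ Ioc (0:ℝ) T, ur 1 t = u 1 t)
    (hinit : ∀ r ∈ Icc (0:ℝ) 1, u r 0 = u0 r) :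
    ∀ r ∈ Icc (0:ℝ) 1, ∀ t ∈ Icc (0:ℝ) T,
      u r t ≤ max M0 1 * Real.exp ((r^2 - 0) / 2 + (N : ℝ) * t) := by
  have hN1 : (1:ℝ) ≤ (N:ℝ) - 1 := by
    have h2 : (2:ℝ) ≤ (N:ℝ) := by exact_mod_cast hN
    linarith
  have haN : (N:ℝ) - 1 ≤ (N:ℝ) := by linarith
  have hNpos : (0:ℝ) < N := by linarith
  set M : ℝ := max M0 1 with hMdef
  have hM1 : (1:ℝ) ≤ M := le_max_right _ _
  have hM0 : M0 ≤ M := le_max_left _ _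
  have hM0' : (0:ℝ) < M := lt_of_lt_of_le one_pos hM1
  set Bmax : ℝ := M * Real.exp (1/2 + (N:ℝ)*T) with hBmaxdef
  have hBmax1 : (1:ℝ) ≤ Bmax := by
    rw [hBmaxdef]
    have h1 : (1:ℝ) ≤ Real.exp (1/2 + (N:ℝ)*T) :=
      one_le_exp_of_nonneg (by nlinarith only [mul_pos hNpos hT])
    nlinarith only [h1, hM1]
  have hBmax0 : (0:ℝ) < Bmax := lt_of_lt_of_le one_pos hBmax1
  set rc : ℝ := 1/(Bmax^2 + 10) with hrcdef
  have hrc0 : 0 < rc := by rw [hrcdef]; positivity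
  have hrc1 : rc * (Bmax^2 + 10) = 1 := by
    rw [hrcdef]; field_simp
  have hrc14 : rc ≤ 1/11 := by
    rw [hrcdef]
    apply div_le_div_of_nonneg_left one_pos.le (by norm_num)
    nlinarith only [hBmax1]
  set μ : ℝ := Real.exp (rc^2) - 1 with hμdef
  have hμ0 : 0 < μ := by
    rw [hμdef]
    have : Real.exp 0 < Real.exp (rc^2) := Real.exp_lt_exp.2 (by positivity)
    rw [Real.exp_zero] at this
    linarith
  set Qu : ℝ := 1 + (Bmax + 3)^2 with hQudef
  have hQu0 : 0 < Qu := by positivity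
  set κ : ℝ := rc^2*μ/2 with hκdef
  have hκ0 : 0 < κ := by rw [hκdef]; positivity
  set e0 : ℝ := min 1 (min (rc^2*μ/(2*(6*Bmax^2+4))) (κ/(16*Qu*N))) with he0def
  have he00 : 0 < e0 := lt_min one_pos (lt_min (by positivity) (by positivity))
  have main : ∀ ε : ℝ, 0 < ε → ε ≤ e0 → ∀ r ∈ Icc (0:ℝ) 1, ∀ t ∈ Icc (0:ℝ) T,
      0 ≤ (M * Real.exp ((r^2 - 0)/2 + (N:ℝ)*t) + ε*(2*r^2 - r + 1)) - u r t := by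
    intro ε he hele
    have he1 : ε ≤ 1 := le_trans hele (min_le_left _ _)
    have hecase : ε ≤ rc^2*μ/(2*(6*Bmax^2+4)) :=
      le_trans hele (le_trans (min_le_right _ _) (min_le_left _ _))
    have heκ : ε ≤ κ/(16*Qu*N) :=
      le_trans hele (le_trans (min_le_right _ _) (min_le_right _ _))
    refine L5 hT
      (fun r t => (M * Real.exp ((r^2 - 0)/2 + (N:ℝ)*t) + ε*(2*r^2 - r + 1)) - u r t)
      (fun r t => (r * (M * Real.exp ((r^2 - 0)/2 + (N:ℝ)*t)) + ε*(4*r - 1)) - ur r t)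
      (fun r t => ((1 + r^2) * (M * Real.exp ((r^2 - 0)/2 + (N:ℝ)*t)) + ε*4) - urr r t)
      (fun r t => (N:ℝ) * (M * Real.exp ((r^2 - 0)/2 + (N:ℝ)*t)) - ut r t)
      ?_ ?_ ?_ ?_ ?_ ?_ ?_ ?_
    · exact ((by fun_prop : Continuous fun p : ℝ × ℝ =>
        M * Real.exp ((p.1^2 - 0)/2 + (N:ℝ)*p.2) + ε*(2*p.1^2 - p.1 + 1)).continuousOn).sub hcu
    · intro t ht r hr
      exact (((hdP_r M 0 (N:ℝ) t r).add (hd_q ε r)).hasDerivWithinAt).sub (hdru t ht r hr)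
    · intro t ht r hr
      exact (((hdP_rr M 0 (N:ℝ) t r).add (hd_q' ε r)).hasDerivWithinAt).sub (hdrur t ht r hr)
    · intro t ht r hr
      exact (((hdP_t M 0 (N:ℝ) r t).add_const (ε*(2*r^2 - r + 1))).hasDerivWithinAt).sub (hdtu t ht r hr)
    · -- initial positivity
      intro r hr
      rw [hinit r hr]
      have hE1 : (1:ℝ) ≤ Real.exp ((r^2 - 0)/2 + (N:ℝ)*0) :=
        one_le_exp_of_nonneg (by nlinarith only [sq_nonneg r])
      have hq : (7:ℝ)/8 ≤ 2*r^2 - r + 1 := by nlinarith only [sq_nonneg (4*r - 1)]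
      nlinarith only [hu0M r hr, hM0, hM1, he, hE1, hq]
    · -- r = 0 boundary
      intro t ht
      rw [hbc0 t ht]
      linarith only [he]
    · -- r = 1 boundary
      intro t ht hw
      rw [hbc1 t ht]
      linarith only [hw, he]
    · -- interior
      intro t ht r hro hw hwr hwrr
      have hr : r ∈ Icc (0:ℝ) 1 := ⟨hro.1.le, hro.2.le⟩
      have hrne : r ≠ 0 := ne_of_gt hro.1
      set B : ℝ := M * Real.exp ((r^2 - 0)/2 + (N:ℝ)*t) with hBdef
      have hB0 : 0 < B := by positivity
      have hB1 : (1:ℝ) ≤ B := by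
        rw [hBdef]
        have h1 : (1:ℝ) ≤ Real.exp ((r^2 - 0)/2 + (N:ℝ)*t) :=
          one_le_exp_of_nonneg (by nlinarith only [sq_nonneg r, mul_nonneg hNpos.le ht.1.le])
        nlinarith only [h1, hM1]
      have hBle : B ≤ Bmax := by
        rw [hBdef, hBmaxdef]
        have h1 : (r^2 - 0)/2 + (N:ℝ)*t ≤ 1/2 + (N:ℝ)*T := by
          have h2 : (N:ℝ)*t ≤ (N:ℝ)*T := mul_le_mul_of_nonneg_left ht.2 hNpos.le
          nlinarith only [h2, hro.1.le, hro.2.le]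
        exact mul_le_mul_of_nonneg_left (Real.exp_le_exp.2 h1) hM0'.le
      have hB2max : B^2 ≤ Bmax^2 := pow_le_pow_left₀ hB0.le hBle 2
      have hurD : ur r t = r*B + ε*(4*r - 1) := by linarith only [hwr]
      have hurrD : urr r t ≤ (1 + r^2)*B + ε*4 := by linarith only [hwrr]
      have hden : (0:ℝ) < 1 + (r*B + ε*(4*r - 1))^2 := by positivity
      rw [heq t ht r hro, hurD]
      clear hurD hwr hwrr heq hcu hdru hdrur hdtu hbc0 hbc1 hinit hu0M hw
      have hsplit : ((N:ℝ)-1)/r*(r*B + ε*(4*r - 1)) = ((N:ℝ)-1)*B + ((N:ℝ)-1)*ε*(4*r - 1)/r := by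
        field_simp
      rw [hsplit]
      have hX : urr r t/(1 + (r*B + ε*(4*r - 1))^2) ≤
          ((1 + r^2)*B + ε*4)/(1 + (r*B + ε*(4*r - 1))^2) := by gcongr
      have hmid : B - ((1 + r^2)*B + ε*4)/(1 + (r*B + ε*(4*r - 1))^2) =
          (B*((r*B + ε*(4*r - 1))^2 - r^2) - ε*4)/(1 + (r*B + ε*(4*r - 1))^2) := by
        field_simp
        ring
      have hexp : B*((r*B + ε*(4*r - 1))^2 - r^2) =
          B*r^2*(B^2 - 1) + 2*r*B^2*(ε*(4*r - 1)) + B*(ε*(4*r - 1))^2 := by ring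
      rcases le_or_gt r rc with hcase | hcase
      · -- r ≤ rc : near the axis
        have h4rneg : 4*r - 1 ≤ 0 := by linarith only [hrc14, hcase]
        have hB21a : (0:ℝ) ≤ B^2 - 1 := by nlinarith only [hB1, hB0]
        have hT1 : 0 ≤ B*r^2*(B^2 - 1) :=
          mul_nonneg (mul_nonneg hB0.le (sq_nonneg r)) hB21a
        have hrB2 : r*B^2 ≤ 1 := by
          have ha1 : r*B^2 ≤ rc*B^2 := mul_le_mul_of_nonneg_right hcase (sq_nonneg B)
          have ha2 : rc*B^2 ≤ rc*Bmax^2 := mul_le_mul_of_nonneg_left hB2max hrc0.le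
          linarith only [ha1, ha2, hrc1, hrc0]
        have hT2 : -(2*ε) ≤ 2*r*B^2*(ε*(4*r - 1)) := by
          have hy : 0 ≤ r*B^2*ε := mul_nonneg (mul_nonneg hro.1.le (sq_nonneg B)) he.le
          have hz : r*B^2*ε ≤ ε := by nlinarith only [hrB2, he.le]
          nlinarith only [hy, hz, hro.1.le]
        have hT3 : 0 ≤ B*(ε*(4*r - 1))^2 := by positivity
        have hnum1 : -(6*ε) ≤ B*((r*B + ε*(4*r - 1))^2 - r^2) - ε*4 := by
          linarith only [hexp, hT1, hT2, hT3, he]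
        have hfrac1 : -(6*ε) ≤ (B*((r*B + ε*(4*r - 1))^2 - r^2) - ε*4)/(1 + (r*B + ε*(4*r - 1))^2) := by
          rw [le_div_iff₀ hden]
          nlinarith only [hnum1, he, sq_nonneg (r*B + ε*(4*r - 1))]
        have hY : ((N:ℝ)-1)*ε*(4*r - 1)/r ≤ -((Bmax^2 + 6)*ε) := by
          rw [div_le_iff₀ hro.1]
          have h1 : 4*r - 1 ≤ -(Bmax^2 + 6)*r := by
            have h2 : (Bmax^2 + 10)*r ≤ (Bmax^2 + 10)*rc :=
              mul_le_mul_of_nonneg_left hcase (by positivity)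
            linarith only [hrc1, h2]
          have hNe : (0:ℝ) ≤ ((N:ℝ) - 2)*ε := mul_nonneg (by linarith only [hN1]) he.le
          have hs1 : ((N:ℝ)-1)*ε*(4*r - 1) ≤ ε*(4*r - 1) := by
            nlinarith only [hNe, h4rneg]
          have hs2 : ε*(4*r - 1) ≤ ε*(-(Bmax^2 + 6)*r) := mul_le_mul_of_nonneg_left h1 he.le
          linarith only [hs1, hs2]
        have hBe : 0 < Bmax^2*ε := by positivity
        linarith only [hX, hmid, hfrac1, hY, hBe]
      · -- rc < r : away from the axis
        have hrc2 : Real.exp (rc^2/2) ≤ B := by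
          have h1 : rc^2/2 ≤ (r^2 - 0)/2 + (N:ℝ)*t := by
            nlinarith only [hcase.le, hrc0, mul_nonneg hNpos.le ht.1.le, mul_self_le_mul_self hrc0.le hcase.le]
          calc Real.exp (rc^2/2) ≤ Real.exp ((r^2 - 0)/2 + (N:ℝ)*t) := Real.exp_le_exp.2 h1
          _ ≤ B := by
              rw [hBdef]
              nlinarith only [Real.exp_pos ((r^2 - 0)/2 + (N:ℝ)*t), hM1]
        have hB2 : 1 + μ ≤ B^2 := by
          have hee : Real.exp (rc^2/2) * Real.exp (rc^2/2) = Real.exp (rc^2) := by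
            rw [← Real.exp_add]; ring_nf
          nlinarith only [hrc2, Real.exp_pos (rc^2/2), hee, hμdef]
        have hr2 : rc^2 ≤ r^2 := by nlinarith only [hrc0, hcase]
        have hB21 : 0 ≤ B^2 - 1 := by linarith only [hB2, hμ0]
        have hT1' : rc^2*μ ≤ B*r^2*(B^2 - 1) := by
          have st1 : rc^2*μ ≤ r^2*(B^2 - 1) := by
            linarith only [mul_nonneg (sub_nonneg.2 hr2) hB21,
              mul_nonneg (sq_nonneg rc) (by linarith only [hB2, hμ0] : (0:ℝ) ≤ B^2 - 1 - μ)]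
          have st2 : r^2*(B^2 - 1) ≤ B*(r^2*(B^2 - 1)) :=
            le_mul_of_one_le_left (mul_nonneg (sq_nonneg r) hB21) hB1
          linarith only [st1, st2]
        have hT2' : -(6*(Bmax^2*ε)) ≤ 2*r*B^2*(ε*(4*r - 1)) := by
          have hb1 : -3 ≤ 4*r - 1 := by linarith only [hro.1.le]
          have hb2 : 4*r - 1 ≤ 3 := by linarith only [hro.2.le]
          have hy : 0 ≤ r*B^2*ε := mul_nonneg (mul_nonneg hro.1.le (sq_nonneg B)) he.le
          have hz : r*B^2*ε ≤ Bmax^2*ε := by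
            linarith only [mul_nonneg (mul_nonneg (sub_nonneg.2 hro.2.le) (sq_nonneg B)) he.le,
              mul_nonneg (sub_nonneg.2 hB2max) he.le]
          nlinarith only [hb1, hy, hz, hro.1.le, mul_nonneg (sq_nonneg Bmax) he.le]
        have hT3 : 0 ≤ B*(ε*(4*r - 1))^2 := by positivity
        have hnum2 : κ ≤ B*((r*B + ε*(4*r - 1))^2 - r^2) - ε*4 := by
          have h2 : ε*(2*(6*Bmax^2 + 4)) ≤ rc^2*μ := (le_div_iff₀ (by positivity)).1 hecase
          exact aux_num B r ε rc μ Bmax κ hT1' hT2' hT3 h2 hκdef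
        have hD1 : r*B + ε*(4*r - 1) ≤ Bmax + 3 := by
          nlinarith only [hro.2.le, hBle, hB0, he, he1, hro.1.le]
        have hD2 : -(Bmax + 3) ≤ r*B + ε*(4*r - 1) := by
          nlinarith only [hro.2.le, hBle, hB0, he, he1, hro.1.le]
        have hQule : 1 + (r*B + ε*(4*r - 1))^2 ≤ Qu := by
          have hsq := sq_le_sq' hD2 hD1
          linarith only [hsq, hQudef]
        have hfrac2 : κ/Qu ≤ (B*((r*B + ε*(4*r - 1))^2 - r^2) - ε*4)/(1 + (r*B + ε*(4*r - 1))^2) :=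
          div_le_div₀ (le_trans hκ0.le hnum2) hnum2 hden hQule
        have hY2 : ((N:ℝ)-1)*ε*(4*r - 1)/r ≤ 4*((N:ℝ)*ε) := by
          rw [div_le_iff₀ hro.1]
          linarith only [mul_nonneg (by linarith only [hN1] : (0:ℝ) ≤ (N:ℝ)-1) he.le,
            mul_nonneg he.le hro.1.le]
        have h4Q : 4*((N:ℝ)*ε) < κ/Qu := by
          rw [lt_div_iff₀ hQu0]
          have h16 : ε*(16*Qu*N) ≤ κ := (le_div_iff₀ (by positivity)).1 heκ
          linarith only [h16, hκ0]
        linarith only [hX, hmid, hfrac2, hY2, h4Q]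
  intro r hr t ht
  by_contra hlt
  push_neg at hlt
  have hphi : 0 < u r t - M * Real.exp ((r^2 - 0)/2 + (N:ℝ)*t) := by linarith
  set ε : ℝ := min e0 ((u r t - M * Real.exp ((r^2 - 0)/2 + (N:ℝ)*t))/4) with hedef
  have hεpos : 0 < ε := lt_min he00 (by positivity)
  have h := main ε hεpos (min_le_left _ _) r hr t ht
  have hq2 : 2*r^2 - r + 1 ≤ 2 := by nlinarith only [hr.1, hr.2]
  have hε4 : ε ≤ (u r t - M * Real.exp ((r^2 - 0)/2 + (N:ℝ)*t))/4 := min_le_right _ _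
  linarith only [h, mul_le_mul_of_nonneg_left hq2 hεpos.le, hε4, hphi]


/-- A classical solution of problem (P) on `[0,1] × [0,T]`: the radially symmetric mean
curvature flow `u_t = u_rr/(1+u_r^2) + ((N-1)/r) u_r` on `(0,1) × (0,T]` with Robin boundary
conditions `u_r(0,t) = 0`, `u_r(1,t) = u(1,t)` for `t ∈ (0,T]` and initial data `u0`. -/
def IsClassicalSolutionOn (N : ℕ) (T : ℝ) (u ur urr ut : ℝ → ℝ → ℝ) (u0 : ℝ → ℝ) : Prop :=
  ContinuousOn (fun p : ℝ × ℝ => u p.1 p.2) (Icc 0 1 ×ˢ Icc 0 T) ∧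
  ContinuousOn (fun p : ℝ × ℝ => ur p.1 p.2) (Icc 0 1 ×ˢ Ioc 0 T) ∧
  ContinuousOn (fun p : ℝ × ℝ => urr p.1 p.2) (Icc 0 1 ×ˢ Ioc 0 T) ∧
  ContinuousOn (fun p : ℝ × ℝ => ut p.1 p.2) (Icc 0 1 ×ˢ Ioc 0 T) ∧
  (∀ t ∈ Ioc (0:ℝ) T, ∀ r ∈ Icc (0:ℝ) 1, HasDerivWithinAt (fun s => u s t) (ur r t) (Icc 0 1) r) ∧
  (∀ t ∈ Ioc (0:ℝ) T, ∀ r ∈ Icc (0:ℝ) 1, HasDerivWithinAt (fun s => ur s t) (urr r t) (Icc 0 1) r) ∧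
  (∀ t ∈ Ioc (0:ℝ) T, ∀ r ∈ Icc (0:ℝ) 1, HasDerivWithinAt (fun tau => u r tau) (ut r t) (Icc 0 T) t) ∧
  (∀ t ∈ Ioc (0:ℝ) T, ∀ r ∈ Ioo (0:ℝ) 1,
    ut r t = urr r t / (1 + (ur r t) ^ 2) + (((N : ℝ) - 1) / r) * ur r t) ∧
  (∀ t ∈ Ioc (0:ℝ) T, ur 0 t = 0) ∧
  (∀ t ∈ Ioc (0:ℝ) T, ur 1 t = u 1 t) ∧
  (∀ r ∈ Icc (0:ℝ) 1, u r 0 = u0 r)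

/-- a priori `L^∞` bounds: for a classical solution on `[0,1] × [0,T]` with
`0 < m0 ≤ u0 ≤ M0`, one has `m0 e^{(r²-1)/2 + (N-1)t} ≤ u(r,t) ≤ max(M0,1) e^{r²/2 + Nt}`;
in particular `C1 e^{(N-1)t} ≤ u ≤ C2 e^{Nt}` for constants `C1, C2 > 0`. -/
theorem apriori_u_bounds (N : ℕ) (hN : 2 ≤ N) (T : ℝ) (hT : 0 < T)
    (u0 : ℝ → ℝ) (m0 M0 : ℝ) (hm0 : 0 < m0)
    (hu0c : ContinuousOn u0 (Icc 0 1))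
    (hu0 : ∀ r ∈ Icc (0:ℝ) 1, m0 ≤ u0 r ∧ u0 r ≤ M0)
    (u ur urr ut : ℝ → ℝ → ℝ) (hu : IsClassicalSolutionOn N T u ur urr ut u0) :
    (∀ r ∈ Icc (0:ℝ) 1, ∀ t ∈ Icc (0:ℝ) T,
      m0 * Real.exp ((r ^ 2 - 1) / 2 + ((N : ℝ) - 1) * t) ≤ u r t ∧
      u r t ≤ max M0 1 * Real.exp (r ^ 2 / 2 + (N : ℝ) * t)) ∧
    ∃ C1 > (0:ℝ), ∃ C2 > (0:ℝ), ∀ r ∈ Icc (0:ℝ) 1, ∀ t ∈ Icc (0:ℝ) T,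
      C1 * Real.exp (((N : ℝ) - 1) * t) ≤ u r t ∧ u r t ≤ C2 * Real.exp ((N : ℝ) * t) := by
  obtain ⟨hcu, hcur, hcurr, hcut, hdru, hdrur, hdtu, heq, hbc0, hbc1, hinit⟩ := hu
  have hlow := key_low N hN T hT u0 m0 hm0 (fun r hr => (hu0 r hr).1) u ur urr ut
    hcu hdru hdrur hdtu heq hbc0 hbc1 hinit
  have hup := key_up N hN T hT u0 M0 (fun r hr => (hu0 r hr).2) u ur urr ut
    hcu hdru hdrur hdtu heq hbc0 hbc1 hinit
  have hup' : ∀ r ∈ Icc (0:ℝ) 1, ∀ t ∈ Icc (0:ℝ) T,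
      u r t ≤ max M0 1 * Real.exp (r ^ 2 / 2 + (N : ℝ) * t) := by
    intro r hr t ht
    have h := hup r hr t ht
    have heq2 : ((r:ℝ)^2 - 0)/2 + (N:ℝ)*t = r^2/2 + (N:ℝ)*t := by ring
    rw [heq2] at h
    exact h
  constructor
  · exact fun r hr t ht => ⟨hlow r hr t ht, hup' r hr t ht⟩
  · refine ⟨m0 * Real.exp (-(1:ℝ)/2), by positivity,
      max M0 1 * Real.exp ((1:ℝ)/2),
      mul_pos (lt_of_lt_of_le one_pos (le_max_right _ _)) (Real.exp_pos _), ?_⟩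
    intro r hr t ht
    constructor
    · have h1 := hlow r hr t ht
      have h2 : m0 * Real.exp (-(1:ℝ)/2) * Real.exp (((N:ℝ)-1)*t) ≤
          m0 * Real.exp ((r^2 - 1)/2 + ((N:ℝ)-1)*t) := by
        rw [mul_assoc, ← Real.exp_add]
        exact mul_le_mul_of_nonneg_left
          (Real.exp_le_exp.2 (by nlinarith only [sq_nonneg r])) hm0.le
      linarith
    · have h1 := hup' r hr t ht
      have h2 : max M0 1 * Real.exp (r^2/2 + (N:ℝ)*t) ≤
          max M0 1 * Real.exp ((1:ℝ)/2) * Real.exp ((N:ℝ)*t) := by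
        rw [mul_assoc, ← Real.exp_add]
        exact mul_le_mul_of_nonneg_left
          (Real.exp_le_exp.2 (by nlinarith only [hr.1, hr.2]))
          (le_trans zero_le_one (le_max_right _ _))
      linarith
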